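/- Let L > 0 be a real number and let λ ∈ ℂ satisfy 4 + 27λ² ≠ 0 (so that the characteristic polynomial μ³ + μ + λ has three pairwise distinct complex roots). Suppose φ : ℝ → ℂ is three times continuously differentiable, is not identically zero on [0,L], and satisfies λ φ(x) = −φ′(x) − φ‴(x) for all x ∈ [0,L] together with the boundary conditions φ(0) = 0, φ′(0) = 0, φ(L) + φ″(L) = 0 and φ′(L) = 0. Then L ∈ 𝔽, i.e., there exist a, b ∈ ℂ with a ≠ 0, b ≠ 0, a + b ≠ 0, L² = −(a² + ab + b²) and e^a/a² = e^b/b² = e^{−(a+b)}/(a+b)². -/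

import Mathlib

open Set

private lemma expAux (μ : ℂ) (t : ℝ) :
    HasDerivAt (fun x : ℝ => Complex.exp (μ * x)) (μ * Complex.exp (μ * t)) t := by
  have h : HasDerivAt (fun x : ℝ => (μ * x : ℂ)) μ t := by
    simpa using (Complex.ofRealCLM.hasDerivAt (x := t)).const_mul μ
  simpa [mul_comm] using h.cexp

noncomputable def kdvP0 : (ℂ × ℂ × ℂ) →L[ℂ] ℂ := ContinuousLinearMap.fst ℂ ℂ (ℂ × ℂ)
noncomputable def kdvP1 : (ℂ × ℂ × ℂ) →L[ℂ] ℂ :=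
  (ContinuousLinearMap.fst ℂ ℂ ℂ).comp (ContinuousLinearMap.snd ℂ ℂ (ℂ × ℂ))
noncomputable def kdvP2 : (ℂ × ℂ × ℂ) →L[ℂ] ℂ :=
  (ContinuousLinearMap.snd ℂ ℂ ℂ).comp (ContinuousLinearMap.snd ℂ ℂ (ℂ × ℂ))
noncomputable def kdvA (lam : ℂ) : (ℂ × ℂ × ℂ) →L[ℂ] (ℂ × ℂ × ℂ) :=
  kdvP1.prod (kdvP2.prod (-kdvP1 - lam • kdvP0))

lemma kdvA_apply (lam : ℂ) (p : ℂ × ℂ × ℂ) :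
    kdvA lam p = (p.2.1, p.2.2, -p.2.1 - lam * p.1) := by
  simp [kdvA, kdvP0, kdvP1, kdvP2]

theorem kdv_eigenfunction_implies_critical_length
    (L : ℝ) (hL : 0 < L) (lam : ℂ) (hlam : 4 + 27 * lam ^ 2 ≠ 0)
    (φ : ℝ → ℂ) (hreg : ContDiff ℝ 3 φ)
    (hne : ∃ x ∈ Icc (0:ℝ) L, φ x ≠ 0)
    (hode : ∀ x ∈ Icc (0:ℝ) L,
      lam * φ x = -(deriv φ x) - deriv (deriv (deriv φ)) x)
    (hbc0 : φ 0 = 0) (hbc0' : deriv φ 0 = 0)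
    (hbcL : φ L + deriv (deriv φ) L = 0) (hbcL' : deriv φ L = 0) :
    ∃ a b : ℂ, a ≠ 0 ∧ b ≠ 0 ∧ a + b ≠ 0 ∧
      (L : ℂ) ^ 2 = -(a ^ 2 + a * b + b ^ 2) ∧
      Complex.exp a / a ^ 2 = Complex.exp b / b ^ 2 ∧
      Complex.exp b / b ^ 2 = Complex.exp (-(a + b)) / (a + b) ^ 2 := by
  obtain ⟨x0, hx0, hx0ne⟩ := hne
  -- roots of the characteristic polynomial μ³ + μ + λ
  obtain ⟨μ1, hμ1⟩ : ∃ z : ℂ, z ^ 3 + z + lam = 0 := by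
    have h : Polynomial.degree ((Polynomial.X : Polynomial ℂ) ^ 3 + Polynomial.X
        + Polynomial.C lam) = 3 := by compute_degree!
    obtain ⟨z, hz⟩ := Complex.exists_root (by rw [h]; norm_num)
    exact ⟨z, by simpa [Polynomial.IsRoot] using hz⟩
  obtain ⟨s, hs⟩ : ∃ s : ℂ, s ^ 2 = μ1 ^ 2 - 4 * (1 + μ1 ^ 2) :=
    IsAlgClosed.exists_pow_nat_eq _ (n := 2) (by norm_num)
  set μ2 : ℂ := (-μ1 + s) / 2 with hμ2def
  set μ3 : ℂ := (-μ1 - s) / 2 with hμ3def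
  have he1 : μ1 + μ2 + μ3 = 0 := by rw [hμ2def, hμ3def]; ring
  have he2 : μ1 * μ2 + μ1 * μ3 + μ2 * μ3 = 1 := by
    rw [hμ2def, hμ3def]; linear_combination (-(1:ℂ)/4) * hs
  have he3 : μ1 * μ2 * μ3 = -lam := by
    rw [hμ2def, hμ3def]; linear_combination (-(μ1:ℂ)/4) * hs + hμ1
  have hr2 : μ2 ^ 3 + μ2 + lam = 0 := by
    linear_combination μ2 ^ 2 * he1 - μ2 * he2 + he3
  have hr3 : μ3 ^ 3 + μ3 + lam = 0 := by
    linear_combination μ3 ^ 2 * he1 - μ3 * he2 + he3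
  -- the roots are pairwise distinct
  have h12 : μ1 ≠ μ2 := by
    intro h
    have hc : s = 3 * μ1 := by rw [hμ2def] at h; linear_combination -2 * h
    have h2' : 3 * μ1 ^ 2 + 1 = 0 := by
      linear_combination (1/4 : ℂ) * hs + (-(s + 3 * μ1)/4) * hc
    exact hlam (by linear_combination (27 * lam - 18 * μ1) * hμ1
      + (-9 * lam * μ1 + 6 * μ1 ^ 2 + 4) * h2')
  have h13 : μ1 ≠ μ3 := by
    intro h
    have hc : s = -3 * μ1 := by rw [hμ3def] at h; linear_combination 2 * h
    have h2' : 3 * μ1 ^ 2 + 1 = 0 := by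
      linear_combination (1/4 : ℂ) * hs + (-(s - 3 * μ1)/4) * hc
    exact hlam (by linear_combination (27 * lam - 18 * μ1) * hμ1
      + (-9 * lam * μ1 + 6 * μ1 ^ 2 + 4) * h2')
  have h23 : μ2 ≠ μ3 := by
    intro h
    have hc : s = 0 := by rw [hμ2def, hμ3def] at h; linear_combination h
    have h2A : 3 * μ1 ^ 2 + 4 = 0 := by linear_combination hs + (-s) * hc
    exact hlam (by linear_combination (27 * lam + 9 * μ1) * hμ1
      + (1 - 3 * μ1 ^ 2 - 9 * lam * μ1) * h2A)
  -- regularity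
  obtain ⟨hφd, -, hreg1⟩ := (contDiff_succ_iff_deriv (n := 2)).mp (by exact_mod_cast hreg)
  have hsplit1 := (contDiff_succ_iff_deriv (n := 1)).mp (by exact_mod_cast hreg1)
  have hφ1d : Differentiable ℝ (deriv φ) := hsplit1.1
  have hreg2 : ContDiff ℝ 1 (deriv (deriv φ)) := hsplit1.2.2
  have hsplit2 := (contDiff_succ_iff_deriv (n := 0)).mp (by exact_mod_cast hreg2)
  have hφ2d : Differentiable ℝ (deriv (deriv φ)) := hsplit2.1
  -- coefficients of the exponential solution
  have hD : (μ1 - μ2) * (μ2 - μ3) * (μ3 - μ1) ≠ 0 :=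
    mul_ne_zero (mul_ne_zero (sub_ne_zero.mpr h12) (sub_ne_zero.mpr h23))
      (sub_ne_zero.mpr (Ne.symm h13))
  set w : ℂ := deriv (deriv φ) 0 with hwdef
  set k : ℂ := -(w / ((μ1 - μ2) * (μ2 - μ3) * (μ3 - μ1))) with hkdef
  set c1 : ℂ := k * (μ2 - μ3) with hc1def
  set c2 : ℂ := k * (μ3 - μ1) with hc2def
  set c3 : ℂ := k * (μ1 - μ2) with hc3def
  have hkw : k * (-((μ1 - μ2) * (μ2 - μ3) * (μ3 - μ1))) = w := by
    rw [hkdef]; field_simp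
  -- the candidate solution
  set g0 : ℝ → ℂ := fun x => c1 * Complex.exp (μ1 * x) + c2 * Complex.exp (μ2 * x)
      + c3 * Complex.exp (μ3 * x) with hg0def
  set g1 : ℝ → ℂ := fun x => c1 * μ1 * Complex.exp (μ1 * x) + c2 * μ2 * Complex.exp (μ2 * x)
      + c3 * μ3 * Complex.exp (μ3 * x) with hg1def
  set g2 : ℝ → ℂ := fun x => c1 * μ1 ^ 2 * Complex.exp (μ1 * x)
      + c2 * μ2 ^ 2 * Complex.exp (μ2 * x) + c3 * μ3 ^ 2 * Complex.exp (μ3 * x) with hg2def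
  have hg0' : ∀ t : ℝ, HasDerivAt g0 (g1 t) t := by
    intro t
    have h := (((expAux μ1 t).const_mul c1).add ((expAux μ2 t).const_mul c2)).add
      ((expAux μ3 t).const_mul c3)
    refine h.congr_deriv (Eq.symm ?_)
    rw [hg1def]; ring
  have hg1' : ∀ t : ℝ, HasDerivAt g1 (g2 t) t := by
    intro t
    have h := (((expAux μ1 t).const_mul (c1 * μ1)).add ((expAux μ2 t).const_mul (c2 * μ2))).add
      ((expAux μ3 t).const_mul (c3 * μ3))
    refine h.congr_deriv (Eq.symm ?_)
    rw [hg2def]; ring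
  have hg2' : ∀ t : ℝ, HasDerivAt g2 (-(g1 t) - lam * g0 t) t := by
    intro t
    have h := (((expAux μ1 t).const_mul (c1 * μ1 ^ 2)).add
      ((expAux μ2 t).const_mul (c2 * μ2 ^ 2))).add ((expAux μ3 t).const_mul (c3 * μ3 ^ 2))
    refine h.congr_deriv (Eq.symm ?_)
    rw [hg1def, hg0def]
    simp only
    linear_combination (-(c1 * Complex.exp (μ1 * t))) * hμ1
      + (-(c2 * Complex.exp (μ2 * t))) * hr2 + (-(c3 * Complex.exp (μ3 * t))) * hr3
  -- the first-order system
  set v : ℝ → (ℂ × ℂ × ℂ) → (ℂ × ℂ × ℂ) :=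
    fun _ p => (p.2.1, p.2.2, -p.2.1 - lam * p.1) with hvdef
  set F : ℝ → ℂ × ℂ × ℂ := fun t => (φ t, deriv φ t, deriv (deriv φ) t) with hFdef
  set G : ℝ → ℂ × ℂ × ℂ := fun t => (g0 t, g1 t, g2 t) with hGdef
  have hlip : ∀ t : ℝ, LipschitzWith ‖kdvA lam‖₊ (v t) := by
    intro t
    have h := (kdvA lam).lipschitz
    have hv2 : v t = fun p => kdvA lam p := by
      funext p; rw [hvdef, kdvA_apply]
    rw [hv2]; exact h
  have hFc : ContinuousOn F (Icc 0 L) := by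
    rw [hFdef]
    exact (hφd.continuous.prodMk
      ((hφ1d.continuous).prodMk hφ2d.continuous)).continuousOn
  have hGc : ContinuousOn G (Icc 0 L) := by
    rw [hGdef]
    have c0 : Continuous g0 := by
      rw [continuous_iff_continuousAt]; exact fun t => (hg0' t).continuousAt
    have c1' : Continuous g1 := by
      rw [continuous_iff_continuousAt]; exact fun t => (hg1' t).continuousAt
    have c2' : Continuous g2 := by
      rw [continuous_iff_continuousAt]; exact fun t => (hg2' t).continuousAt
    exact (c0.prodMk (c1'.prodMk c2')).continuousOn
  have hF' : ∀ t ∈ Ico (0:ℝ) L, HasDerivWithinAt F (v t (F t)) (Ici t) t := by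
    intro t ht
    have h1 : HasDerivAt φ (deriv φ t) t := (hφd t).hasDerivAt
    have h2 : HasDerivAt (deriv φ) (deriv (deriv φ) t) t := (hφ1d t).hasDerivAt
    have h3 : HasDerivAt (deriv (deriv φ)) (deriv (deriv (deriv φ)) t) t := (hφ2d t).hasDerivAt
    have hd : HasDerivAt F (deriv φ t, deriv (deriv φ) t, deriv (deriv (deriv φ)) t) t := by
      rw [hFdef]; exact h1.prodMk (h2.prodMk h3)
    have ho := hode t (Ico_subset_Icc_self ht)
    have heqv : (deriv φ t, deriv (deriv φ) t, deriv (deriv (deriv φ)) t) = v t (F t) := by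
      have h3' : deriv (deriv (deriv φ)) t = -(deriv φ t) - lam * φ t := by
        linear_combination ho
      rw [hvdef, hFdef, h3']
    exact (heqv ▸ hd).hasDerivWithinAt
  have hG' : ∀ t ∈ Ico (0:ℝ) L, HasDerivWithinAt G (v t (G t)) (Ici t) t := by
    intro t _
    have hd : HasDerivAt G (g1 t, g2 t, -(g1 t) - lam * g0 t) t := by
      rw [hGdef]; exact (hg0' t).prodMk ((hg1' t).prodMk (hg2' t))
    have heqv : (g1 t, g2 t, -(g1 t) - lam * g0 t) = v t (G t) := by
      rw [hvdef, hGdef]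
    exact (heqv ▸ hd).hasDerivWithinAt
  have h0eq : F 0 = G 0 := by
    rw [hFdef, hGdef]
    refine Prod.ext ?_ (Prod.ext ?_ ?_) <;>
      simp only [hg0def, hg1def, hg2def, Complex.ofReal_zero, mul_zero, Complex.exp_zero,
        mul_one]
    · rw [hbc0, hc1def, hc2def, hc3def]; ring
    · rw [hbc0', hc1def, hc2def, hc3def]; ring
    · rw [← hwdef, hc1def, hc2def, hc3def]
      linear_combination -hkw
  have heqOn : EqOn F G (Icc 0 L) :=
    ODE_solution_unique hlip hFc hF' hGc hG' h0eq
  -- w ≠ 0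
  have hw0 : w ≠ 0 := by
    intro hw
    apply hx0ne
    have hk0 : k = 0 := by rw [hkdef, hw]; simp
    have hFx0 := heqOn hx0
    rw [hFdef, hGdef] at hFx0
    have hφx0 : φ x0 = g0 x0 := congrArg Prod.fst hFx0
    rw [hφx0, hg0def]
    simp only [hc1def, hc2def, hc3def, hk0, zero_mul]
    ring
  have hk : k ≠ 0 := by
    intro h
    apply hw0
    rw [← hkw, h, zero_mul]
  -- boundary equations at x = L
  have hLmem : L ∈ Icc (0:ℝ) L := ⟨le_of_lt hL, le_refl L⟩
  have hFL := heqOn hLmem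
  rw [hFdef, hGdef] at hFL
  have hφL : φ L = g0 L := congrArg Prod.fst hFL
  have hφ1L : deriv φ L = g1 L := congrArg (fun p => p.2.1) hFL
  have hφ2L : deriv (deriv φ) L = g2 L := congrArg (fun p => p.2.2) hFL
  have hBC1 : c1 * μ1 * Complex.exp (μ1 * L) + c2 * μ2 * Complex.exp (μ2 * L)
      + c3 * μ3 * Complex.exp (μ3 * L) = 0 := by
    have h : g1 L = 0 := by rw [← hφ1L]; exact hbcL'
    rw [hg1def] at h
    simpa using h
  have hBC2 : c1 * (1 + μ1 ^ 2) * Complex.exp (μ1 * L) + c2 * (1 + μ2 ^ 2) * Complex.exp (μ2 * L)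
      + c3 * (1 + μ3 ^ 2) * Complex.exp (μ3 * L) = 0 := by
    have h : g0 L + g2 L = 0 := by rw [← hφL, ← hφ2L]; exact hbcL
    rw [hg0def, hg2def] at h
    simp only at h
    linear_combination h
  set E1 : ℂ := Complex.exp (μ1 * L) with hE1def
  set E2 : ℂ := Complex.exp (μ2 * L) with hE2def
  set E3 : ℂ := Complex.exp (μ3 * L) with hE3def
  have hE1ne : E1 ≠ 0 := by rw [hE1def]; exact Complex.exp_ne_zero _
  have hE2ne : E2 ≠ 0 := by rw [hE2def]; exact Complex.exp_ne_zero _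
  have hE3ne : E3 ≠ 0 := by rw [hE3def]; exact Complex.exp_ne_zero _
  have hA3 : (μ2 - μ3) * μ1 * E1 + (μ3 - μ1) * μ2 * E2 + (μ1 - μ2) * μ3 * E3 = 0 := by
    apply mul_left_cancel₀ hk
    rw [mul_zero]
    rw [hc1def, hc2def, hc3def] at hBC1
    linear_combination hBC1
  have hA4' : (μ2 - μ3) * (1 + μ1 ^ 2) * E1 + (μ3 - μ1) * (1 + μ2 ^ 2) * E2
      + (μ1 - μ2) * (1 + μ3 ^ 2) * E3 = 0 := by
    apply mul_left_cancel₀ hk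
    rw [mul_zero]
    rw [hc1def, hc2def, hc3def] at hBC2
    linear_combination hBC2
  have hA4 : (μ2 - μ3) * (μ2 * μ3) * E1 + (μ3 - μ1) * (μ3 * μ1) * E2
      + (μ1 - μ2) * (μ1 * μ2) * E3 = 0 := by
    linear_combination hA4' + ((μ2 - μ3) * E1 + (μ3 - μ1) * E2 + (μ1 - μ2) * E3) * he2
      - ((μ2 - μ3) * μ1 * E1 + (μ3 - μ1) * μ2 * E2 + (μ1 - μ2) * μ3 * E3) * he1
  -- all roots are nonzero
  have hm1 : μ1 ≠ 0 := by
    intro h0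
    have hp : (μ2 - μ3) * (μ2 * μ3) * E1 = 0 := by
      linear_combination hA4 - ((μ3 - μ1) * μ3 * E2 + (μ1 - μ2) * μ2 * E3) * h0
    have hq : μ2 * μ3 = 1 := by linear_combination he2 - (μ2 + μ3) * h0
    have hr : (μ2 - μ3) * E1 = 0 := by linear_combination hp - ((μ2 - μ3) * E1) * hq
    rcases mul_eq_zero.mp hr with h | h
    · exact sub_ne_zero.mpr h23 h
    · exact hE1ne h
  have hm2 : μ2 ≠ 0 := by
    intro h0
    have hp : (μ3 - μ1) * (μ3 * μ1) * E2 = 0 := by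
      linear_combination hA4 - ((μ2 - μ3) * μ3 * E1 + (μ1 - μ2) * μ1 * E3) * h0
    have hq : μ3 * μ1 = 1 := by linear_combination he2 - (μ1 + μ3) * h0
    have hr : (μ3 - μ1) * E2 = 0 := by linear_combination hp - ((μ3 - μ1) * E2) * hq
    rcases mul_eq_zero.mp hr with h | h
    · exact sub_ne_zero.mpr (Ne.symm h13) h
    · exact hE2ne h
  have hm3 : μ3 ≠ 0 := by
    intro h0
    have hp : (μ1 - μ2) * (μ1 * μ2) * E3 = 0 := by
      linear_combination hA4 - ((μ2 - μ3) * μ2 * E1 + (μ3 - μ1) * μ1 * E2) * h0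
    have hq : μ1 * μ2 = 1 := by linear_combination he2 - (μ1 + μ2) * h0
    have hr : (μ1 - μ2) * E3 = 0 := by linear_combination hp - ((μ1 - μ2) * E3) * hq
    rcases mul_eq_zero.mp hr with h | h
    · exact sub_ne_zero.mpr h12 h
    · exact hE3ne h
  -- the key proportionality relations
  have key12 : (μ2 - μ3) * (μ3 - μ1) * (μ2 ^ 2 * E1 - μ1 ^ 2 * E2) = 0 := by
    linear_combination μ1 * μ2 * hA3 - μ3 * hA4
      - ((μ2 - μ3) * (μ2 * (μ1 - μ3) * E1 + μ1 * (μ3 - μ1) * E2)) * he1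
  have H12 : μ2 ^ 2 * E1 = μ1 ^ 2 * E2 := by
    have hne' : (μ2 - μ3) * (μ3 - μ1) ≠ 0 :=
      mul_ne_zero (sub_ne_zero.mpr h23) (sub_ne_zero.mpr (Ne.symm h13))
    exact sub_eq_zero.mp ((mul_eq_zero.mp key12).resolve_left hne')
  have key23 : (μ3 - μ1) * (μ1 - μ2) * (μ3 ^ 2 * E2 - μ2 ^ 2 * E3) = 0 := by
    linear_combination μ2 * μ3 * hA3 - μ1 * hA4
      - ((μ3 - μ1) * (μ3 * (μ2 - μ1) * E2 + μ2 * (μ1 - μ2) * E3)) * he1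
  have H23 : μ3 ^ 2 * E2 = μ2 ^ 2 * E3 := by
    have hne' : (μ3 - μ1) * (μ1 - μ2) ≠ 0 :=
      mul_ne_zero (sub_ne_zero.mpr (Ne.symm h13)) (sub_ne_zero.mpr h12)
    exact sub_eq_zero.mp ((mul_eq_zero.mp key23).resolve_left hne')
  -- conclusion
  have hLne : (L : ℂ) ≠ 0 := by
    simpa using ne_of_gt hL
  refine ⟨(L : ℂ) * μ1, (L : ℂ) * μ2, mul_ne_zero hLne hm1, mul_ne_zero hLne hm2, ?_, ?_, ?_, ?_⟩
  · have hsum : (L : ℂ) * μ1 + (L : ℂ) * μ2 = -((L : ℂ) * μ3) := by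
      linear_combination (L : ℂ) * he1
    rw [hsum, neg_ne_zero]
    exact mul_ne_zero hLne hm3
  · linear_combination ((L : ℂ) ^ 2 * (μ1 + μ2)) * he1 - (L : ℂ) ^ 2 * he2
  · have hea : Complex.exp ((L : ℂ) * μ1) = E1 := by rw [hE1def, mul_comm]
    have heb : Complex.exp ((L : ℂ) * μ2) = E2 := by rw [hE2def, mul_comm]
    rw [hea, heb, div_eq_div_iff (pow_ne_zero 2 (mul_ne_zero hLne hm1))
      (pow_ne_zero 2 (mul_ne_zero hLne hm2))]
    linear_combination (L : ℂ) ^ 2 * H12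
  · have heb : Complex.exp ((L : ℂ) * μ2) = E2 := by rw [hE2def, mul_comm]
    have hsum : -((L : ℂ) * μ1 + (L : ℂ) * μ2) = (L : ℂ) * μ3 := by
      linear_combination -(L : ℂ) * he1
    have hec : Complex.exp (-((L : ℂ) * μ1 + (L : ℂ) * μ2)) = E3 := by
      rw [hsum, hE3def, mul_comm]
    have hsq : ((L : ℂ) * μ1 + (L : ℂ) * μ2) ^ 2 = ((L : ℂ) * μ3) ^ 2 := by
      linear_combination ((L : ℂ) ^ 2 * (μ1 + μ2 - μ3)) * he1
    rw [heb, hec, hsq, div_eq_div_iff (pow_ne_zero 2 (mul_ne_zero hLne hm2))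
      (pow_ne_zero 2 (mul_ne_zero hLne hm3))]
    linear_combination (L : ℂ) ^ 2 * H23
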